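/- arXiv:2311.07243 — 3 statements merged into one kernel-verified Lean document; each statement's English description precedes it below -/
import Mathlib

section
/- (Davis–Kahan sin Θ bound) Let G, G° ∈ ℝ^{m×m} be symmetric, let Ē ∈ ℝ^{m×d} have orthonormal columns spanning the invariant subspace of G associated with a group of eigenvalues separated by a gap Δ > 0 from the rest of the spectrum of G°, and let Ē° be the corresponding orthonormal eigenvector matrix of G°. Then ‖Ē°(Ē°)' − ĒĒ'‖_op ≤ 2·‖(G − G°)·Ē‖_op/Δ ≤ 2·‖G − G°‖_op/Δ. -/
open Matrix
open scoped Matrix.Norms.L2Operator RealInnerProductSpace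

set_option linter.unusedSectionVars false
set_option maxHeartbeats 4000000

namespace DKaux

variable {p q r : Type*} [Fintype p] [Fintype q] [Fintype r]
  [DecidableEq p] [DecidableEq q] [DecidableEq r]

/-- coercion to Euclidean space -/
noncomputable def ev {n : Type*} (x : n → ℝ) : EuclideanSpace ℝ n := (WithLp.equiv 2 _).symm x

lemma norm_mulVec_le (A : Matrix p q ℝ) (x : q → ℝ) : ‖ev (A *ᵥ x)‖ ≤ ‖A‖ * ‖ev x‖ :=
  A.l2_opNorm_mulVec (ev x)

lemma norm_le_of_forall (A : Matrix p q ℝ) {C : ℝ} (hC : 0 ≤ C)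
    (h : ∀ x : q → ℝ, ‖ev (A *ᵥ x)‖ ≤ C * ‖ev x‖) : ‖A‖ ≤ C := by
  rw [Matrix.l2_opNorm_def]
  refine ContinuousLinearMap.opNorm_le_bound _ hC fun x => ?_
  simpa [Matrix.toEuclideanLin_apply, ev] using h (WithLp.equiv 2 _ x)

lemma inner_ev (x y : q → ℝ) : ⟪ev x, ev y⟫ = x ⬝ᵥ y := by
  exact (EuclideanSpace.inner_toLp_toLp x y).trans (by rw [star_trivial, dotProduct_comm])

lemma ev_sub (x y : q → ℝ) : ev (x - y) = ev x - ev y := rfl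
lemma ev_smul (c : ℝ) (x : q → ℝ) : ev (c • x) = c • ev x := rfl

lemma quadform_nonneg {N : Matrix q q ℝ} (hN : N.PosSemidef) (x : q → ℝ) :
    0 ≤ ⟪ev x, ev (N *ᵥ x)⟫ := by
  rw [inner_ev]
  simpa using hN.dotProduct_mulVec_nonneg x

lemma psd_of_quadform {N : Matrix q q ℝ} (hN : Nᵀ = N)
    (h : ∀ x, 0 ≤ ⟪ev x, ev (N *ᵥ x)⟫) : N.PosSemidef := by
  refine Matrix.PosSemidef.of_dotProduct_mulVec_nonneg ?_ fun x => by simpa [inner_ev] using h x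
  rw [Matrix.IsHermitian, conjTranspose_eq_transpose_of_trivial, hN]

lemma inner_mulVec_symm {A : Matrix q q ℝ} (hA : Aᵀ = A) (x y : q → ℝ) :
    ⟪ev (A *ᵥ x), ev y⟫ = ⟪ev x, ev (A *ᵥ y)⟫ := by
  rw [inner_ev, inner_ev, Matrix.dotProduct_mulVec x A y, dotProduct_comm,
    ← Matrix.vecMul_transpose, hA, dotProduct_comm]

lemma normT (A : Matrix p q ℝ) : ‖Aᵀ‖ = ‖A‖ := by
  rw [← conjTranspose_eq_transpose_of_trivial, Matrix.l2_opNorm_conjTranspose]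

lemma norm_sq_eq (A : Matrix p q ℝ) : ‖Aᵀ * A‖ = ‖A‖ * ‖A‖ := by
  rw [← conjTranspose_eq_transpose_of_trivial, Matrix.l2_opNorm_conjTranspose_mul_self]

lemma norm_isometry {E : Matrix p q ℝ} (h : Eᵀ * E = 1) : ‖E‖ ≤ 1 := by
  have h1 : ‖(1 : Matrix q q ℝ)‖ ≤ 1 := by
    refine norm_le_of_forall _ zero_le_one fun x => by simp
  have := norm_sq_eq E
  rw [h] at this
  nlinarith [norm_nonneg E]

lemma quad_expand (N : Matrix q q ℝ) (t : ℝ) (x : q → ℝ) :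
    ⟪ev x, ev ((t • (1 : Matrix q q ℝ) - N) *ᵥ x)⟫ = t * ‖ev x‖ ^ 2 - ⟪ev x, ev (N *ᵥ x)⟫ := by
  have : (t • (1 : Matrix q q ℝ) - N) *ᵥ x = t • x - N *ᵥ x := by
    simp [Matrix.sub_mulVec, Matrix.smul_mulVec]
  rw [this, ev_sub, inner_sub_right, ev_smul, inner_smul_right, real_inner_self_eq_norm_sq]

lemma quad_expand' (N : Matrix q q ℝ) (t : ℝ) (x : q → ℝ) :
    ⟪ev x, ev ((N + t • (1 : Matrix q q ℝ)) *ᵥ x)⟫ = ⟪ev x, ev (N *ᵥ x)⟫ + t * ‖ev x‖ ^ 2 := by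
  have : (N + t • (1 : Matrix q q ℝ)) *ᵥ x = N *ᵥ x + t • x := by
    simp [Matrix.add_mulVec, Matrix.smul_mulVec]
  rw [this]
  rw [show ev (N *ᵥ x + t • x) = ev (N *ᵥ x) + t • ev x from rfl]
  rw [inner_add_right, inner_smul_right, real_inner_self_eq_norm_sq]

/-- Spectral sandwich: a symmetric matrix with `-t•1 ⪯ M ⪯ t•1` has norm at most `t`. -/
lemma norm_le_of_sandwich {M : Matrix q q ℝ} {t : ℝ} (hM : Mᵀ = M) (ht : 0 ≤ t)
    (h1 : (t • (1 : Matrix q q ℝ) - M).PosSemidef)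
    (h2 : (M + t • (1 : Matrix q q ℝ)).PosSemidef) : ‖M‖ ≤ t := by
  have quad : ∀ z : q → ℝ, |⟪ev z, ev (M *ᵥ z)⟫| ≤ t * ‖ev z‖ ^ 2 := by
    intro z
    have a1 := quadform_nonneg h1 z
    have a2 := quadform_nonneg h2 z
    rw [quad_expand] at a1
    rw [quad_expand'] at a2
    rw [abs_le]; constructor <;> nlinarith
  have bil : ∀ x y : q → ℝ, ⟪ev (M *ᵥ x), ev y⟫ ≤ t / 2 * (‖ev x‖ ^ 2 + ‖ev y‖ ^ 2) := by
    intro x y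
    have e4 : 4 * ⟪ev (M *ᵥ x), ev y⟫
        = ⟪ev (x + y), ev (M *ᵥ (x + y))⟫ - ⟪ev (x - y), ev (M *ᵥ (x - y))⟫ := by
      have hxy : M *ᵥ (x + y) = M *ᵥ x + M *ᵥ y := by rw [Matrix.mulVec_add]
      have hxy' : M *ᵥ (x - y) = M *ᵥ x - M *ᵥ y := by rw [Matrix.mulVec_sub]
      rw [hxy, hxy', show ev (x+y) = ev x + ev y from rfl, ev_sub,
        show ev (M *ᵥ x + M *ᵥ y) = ev (M *ᵥ x) + ev (M *ᵥ y) from rfl, ev_sub]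
      have hc : ⟪ev x, ev (M *ᵥ y)⟫ = ⟪ev (M *ᵥ x), ev y⟫ := by
        rw [← inner_mulVec_symm hM x y]
      rw [inner_add_right, inner_add_left, inner_add_left, inner_sub_right, inner_sub_left,
        inner_sub_left]
      have hcomm : ⟪ev y, ev (M *ᵥ x)⟫ = ⟪ev (M *ᵥ x), ev y⟫ := real_inner_comm _ _
      linarith [hc, hcomm]
    have b1 := (abs_le.mp (quad (x + y))).2
    have b2 := (neg_le_of_abs_le (quad (x - y)))
    have par : ‖ev (x + y)‖ ^ 2 + ‖ev (x - y)‖ ^ 2 = 2 * (‖ev x‖ ^ 2 + ‖ev y‖ ^ 2) := by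
      rw [show ev (x+y) = ev x + ev y from rfl, ev_sub]
      have := norm_add_sq_real (ev x) (ev y)
      have := norm_sub_sq_real (ev x) (ev y)
      linarith
    nlinarith [e4]
  refine norm_le_of_forall _ ht fun x => ?_
  rcases eq_or_ne ‖ev (M *ᵥ x)‖ 0 with h0 | h0
  · rw [h0]; positivity
  · have hMx : 0 < ‖ev (M *ᵥ x)‖ := lt_of_le_of_ne (norm_nonneg _) (Ne.symm h0)
    set y : q → ℝ := (‖ev x‖ / ‖ev (M *ᵥ x)‖) • (M *ᵥ x) with hy
    have hynorm : ‖ev y‖ = ‖ev x‖ := by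
      rw [hy, ev_smul, norm_smul, Real.norm_eq_abs, abs_div, abs_of_nonneg (norm_nonneg _),
        abs_of_pos hMx, div_mul_cancel₀]
      exact ne_of_gt hMx
    have hinner : ⟪ev (M *ᵥ x), ev y⟫ = ‖ev x‖ * ‖ev (M *ᵥ x)‖ := by
      rw [hy, ev_smul, inner_smul_right, real_inner_self_eq_norm_sq]
      field_simp
    have := bil x y
    rw [hinner, hynorm] at this
    rcases eq_or_ne ‖ev x‖ 0 with hx0 | hx0
    · nlinarith [norm_mulVec_le M x, norm_nonneg M]
    · have hx : 0 < ‖ev x‖ := lt_of_le_of_ne (norm_nonneg _) (Ne.symm hx0)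
      nlinarith

/-- if `MᵀM ⪰ c²·1` then `‖Mx‖ ≥ c‖x‖`. -/
lemma mulVec_lower {M : Matrix p q ℝ} {c : ℝ} (hc : 0 ≤ c)
    (h : (Mᵀ * M - c ^ 2 • (1 : Matrix q q ℝ)).PosSemidef) (x : q → ℝ) :
    c * ‖ev x‖ ≤ ‖ev (M *ᵥ x)‖ := by
  have key : c ^ 2 * ‖ev x‖ ^ 2 ≤ ‖ev (M *ᵥ x)‖ ^ 2 := by
    have hq := quadform_nonneg h x
    have e1 : ⟪ev x, ev ((Mᵀ * M) *ᵥ x)⟫ = ‖ev (M *ᵥ x)‖ ^ 2 := by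
      rw [inner_ev, ← Matrix.mulVec_mulVec, Matrix.dotProduct_mulVec x Mᵀ,
        ← Matrix.mulVec_transpose, transpose_transpose, ← inner_ev,
        real_inner_self_eq_norm_sq]
    have e2 : (Mᵀ * M - c ^ 2 • (1 : Matrix q q ℝ)) *ᵥ x = (Mᵀ * M) *ᵥ x - c ^ 2 • x := by
      simp [Matrix.sub_mulVec, Matrix.smul_mulVec]
    rw [e2, show ev ((Mᵀ * M) *ᵥ x - c ^ 2 • x) = ev ((Mᵀ * M) *ᵥ x) - c ^ 2 • ev x from rfl,
      inner_sub_right, inner_smul_right, real_inner_self_eq_norm_sq, e1] at hq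
    linarith
  nlinarith [norm_nonneg (ev (M *ᵥ x)), norm_nonneg (ev x), mul_nonneg hc (norm_nonneg (ev x))]

/-- transfer a lower bound from `M` to `Mᵀ` for square `M`. -/
lemma transpose_lower {M : Matrix q q ℝ} {c : ℝ} (hc : 0 < c)
    (h : ∀ x, c * ‖ev x‖ ≤ ‖ev (M *ᵥ x)‖) (x : q → ℝ) :
    c * ‖ev x‖ ≤ ‖ev (Mᵀ *ᵥ x)‖ := by
  have hinj : Function.Injective M.mulVec := by
    intro u v huv
    have h00 : M *ᵥ (u - v) = 0 := by rw [Matrix.mulVec_sub, huv, sub_self]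
    have h0 := h (u - v)
    rw [h00] at h0
    have hz : ‖ev (0 : q → ℝ)‖ = 0 := by simp [ev]
    have hle : ‖ev (u - v)‖ ≤ 0 := by nlinarith [norm_nonneg (ev (u - v))]
    have he0 : ev (u - v) = 0 :=
      norm_eq_zero.mp (le_antisymm hle (norm_nonneg _))
    have huv0 : u - v = 0 := by
      have := congrArg (WithLp.equiv 2 (q → ℝ)) he0
      simpa [ev] using this
    exact sub_eq_zero.mp huv0
  have hunit : IsUnit M := Matrix.mulVec_injective_iff_isUnit.mp hinj
  have hdet : IsUnit M.det := (Matrix.isUnit_iff_isUnit_det M).mp hunit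
  have hdetT : IsUnit Mᵀ.det := by rwa [Matrix.det_transpose]
  have hinv : ‖M⁻¹‖ ≤ 1 / c := by
    refine norm_le_of_forall _ (by positivity) fun z => ?_
    have hMz : M *ᵥ (M⁻¹ *ᵥ z) = z := by
      rw [Matrix.mulVec_mulVec, Matrix.mul_nonsing_inv _ hdet, Matrix.one_mulVec]
    have := h (M⁻¹ *ᵥ z)
    rw [hMz] at this
    rw [div_mul_eq_mul_div, le_div_iff₀ hc]
    linarith
  have hinvT : ‖Mᵀ⁻¹‖ ≤ 1 / c := by
    rw [← Matrix.transpose_nonsing_inv, normT]; exact hinv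
  have hxid : Mᵀ⁻¹ *ᵥ (Mᵀ *ᵥ x) = x := by
    rw [Matrix.mulVec_mulVec, Matrix.nonsing_inv_mul _ hdetT, Matrix.one_mulVec]
  have hbd := norm_mulVec_le Mᵀ⁻¹ (Mᵀ *ᵥ x)
  rw [hxid] at hbd
  have h2 : ‖ev x‖ ≤ 1 / c * ‖ev (Mᵀ *ᵥ x)‖ := by
    calc ‖ev x‖ ≤ ‖Mᵀ⁻¹‖ * ‖ev (Mᵀ *ᵥ x)‖ := hbd
    _ ≤ 1 / c * ‖ev (Mᵀ *ᵥ x)‖ := mul_le_mul_of_nonneg_right hinvT (norm_nonneg _)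
  rw [div_mul_eq_mul_div, one_mul, le_div_iff₀ hc] at h2
  linarith

/-- PSD plus norm bound gives Loewner upper bound. -/
lemma psd_le_of_norm {N : Matrix q q ℝ} (hN : N.PosSemidef) {t : ℝ} (h : ‖N‖ ≤ t) :
    (t • (1 : Matrix q q ℝ) - N).PosSemidef := by
  have hNt : Nᵀ = N := by
    have := hN.1
    rwa [Matrix.IsHermitian, conjTranspose_eq_transpose_of_trivial] at this
  refine psd_of_quadform ?_ fun x => ?_
  · rw [transpose_sub, transpose_smul, transpose_one, hNt]
  · rw [quad_expand]
    have hcs : ⟪ev x, ev (N *ᵥ x)⟫ ≤ ‖ev x‖ * ‖ev (N *ᵥ x)‖ := real_inner_le_norm _ _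
    have := norm_mulVec_le N x
    nlinarith [norm_nonneg (ev x), norm_nonneg N, mul_le_mul_of_nonneg_left h (norm_nonneg (ev x))]

lemma inner_gram (M : Matrix p q ℝ) (x : q → ℝ) :
    ⟪ev x, ev ((Mᵀ * M) *ᵥ x)⟫ = ‖ev (M *ᵥ x)‖ ^ 2 := by
  rw [inner_ev, ← Matrix.mulVec_mulVec, Matrix.dotProduct_mulVec x Mᵀ,
    ← Matrix.mulVec_transpose, transpose_transpose, ← inner_ev, real_inner_self_eq_norm_sq]

lemma quad_one_sub (A : Matrix q q ℝ) (x : q → ℝ) :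
    ⟪ev x, ev (((1 : Matrix q q ℝ) - A) *ᵥ x)⟫ = ‖ev x‖ ^ 2 - ⟪ev x, ev (A *ᵥ x)⟫ := by
  have h1 : (1 : Matrix q q ℝ) - A = (1 : ℝ) • (1 : Matrix q q ℝ) - A := by rw [one_smul]
  rw [h1, quad_expand, one_mul]

lemma one_sub_gram_psd {M : Matrix p q ℝ} (h : ‖M‖ ≤ 1) :
    ((1 : Matrix q q ℝ) - Mᵀ * M).PosSemidef := by
  refine psd_of_quadform (by simp [transpose_mul]) fun x => ?_
  rw [quad_one_sub, inner_gram]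
  have := norm_mulVec_le M x
  nlinarith [norm_nonneg (ev x), norm_nonneg (ev (M *ᵥ x)), norm_nonneg M,
    mul_le_mul_of_nonneg_right h (norm_nonneg (ev x))]

/-- Key symmetry step: `‖1 - MMᵀ‖ ≤ ‖1 - MᵀM‖` for square contractions. -/
lemma norm_one_sub_swap {M : Matrix q q ℝ} (hM : ‖M‖ ≤ 1) :
    ‖(1 : Matrix q q ℝ) - M * Mᵀ‖ ≤ ‖(1 : Matrix q q ℝ) - Mᵀ * M‖ := by
  set s := ‖(1 : Matrix q q ℝ) - Mᵀ * M‖ with hs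
  have hs0 : 0 ≤ s := norm_nonneg _
  have hMT : ‖Mᵀ‖ ≤ 1 := by rw [normT]; exact hM
  have hN2psd : ((1 : Matrix q q ℝ) - M * Mᵀ).PosSemidef := by
    have := one_sub_gram_psd hMT
    rwa [transpose_transpose] at this
  have hN2sym : ((1 : Matrix q q ℝ) - M * Mᵀ)ᵀ = (1 : Matrix q q ℝ) - M * Mᵀ := by
    simp [transpose_sub, transpose_mul]
  have hquadN2 : ∀ x : q → ℝ, ⟪ev x, ev (((1 : Matrix q q ℝ) - M * Mᵀ) *ᵥ x)⟫
      = ‖ev x‖ ^ 2 - ‖ev (Mᵀ *ᵥ x)‖ ^ 2 := by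
    intro x
    rw [quad_one_sub]
    have := inner_gram Mᵀ x
    rw [transpose_transpose] at this
    rw [this]
  have key : ∀ x : q → ℝ, ‖ev x‖ ^ 2 - ‖ev (Mᵀ *ᵥ x)‖ ^ 2 ≤ s * ‖ev x‖ ^ 2 := by
    intro x
    rcases le_or_gt 1 s with hs1 | hs1
    · nlinarith [norm_nonneg (ev (Mᵀ *ᵥ x)), norm_nonneg (ev x)]
    · set c := 1 - s with hc
      have hc0 : 0 < c := by linarith
      have hgram : (Mᵀ * M - (Real.sqrt c) ^ 2 • (1 : Matrix q q ℝ)).PosSemidef := by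
        rw [Real.sq_sqrt hc0.le]
        have h1 : Mᵀ * M - c • (1 : Matrix q q ℝ)
            = s • (1 : Matrix q q ℝ) - ((1 : Matrix q q ℝ) - Mᵀ * M) := by
          rw [hc, sub_smul, one_smul]; abel
        rw [h1]
        exact psd_le_of_norm (one_sub_gram_psd hM) le_rfl
      have hlow := mulVec_lower (Real.sqrt_nonneg c) hgram
      have hlowT := transpose_lower (Real.sqrt_pos.mpr hc0) hlow x
      have hsq := mul_le_mul hlowT hlowT (by positivity) (norm_nonneg _)
      have hcx : c * ‖ev x‖ ^ 2 ≤ ‖ev (Mᵀ *ᵥ x)‖ ^ 2 := by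
        nlinarith [Real.sq_sqrt hc0.le]
      nlinarith
  refine norm_le_of_sandwich hN2sym hs0 ?_ ?_
  · refine psd_of_quadform ?_ fun x => ?_
    · rw [transpose_sub, transpose_smul, transpose_one, hN2sym]
    · rw [quad_expand, hquadN2]
      linarith [key x]
  · refine psd_of_quadform ?_ fun x => ?_
    · rw [transpose_add, transpose_smul, transpose_one, hN2sym]
    · rw [quad_expand', hquadN2]
      nlinarith [key x, norm_mulVec_le Mᵀ x, norm_nonneg (ev x), norm_nonneg (ev (Mᵀ *ᵥ x)),
        mul_le_mul_of_nonneg_right hMT (norm_nonneg (ev x))]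

/-- `‖A * B * C‖ ≤ ‖B‖` when `A, C` are contractions. -/
lemma norm_triple_le {A : Matrix p q ℝ} {B : Matrix q r ℝ} {n' : Type*} [Fintype n'] [DecidableEq n']
    {C : Matrix r n' ℝ} (hA : ‖A‖ ≤ 1) (hC : ‖C‖ ≤ 1) : ‖A * B * C‖ ≤ ‖B‖ := by
  calc ‖A * B * C‖ ≤ ‖A * B‖ * ‖C‖ := Matrix.l2_opNorm_mul _ _
  _ ≤ ‖A * B‖ := by
      nlinarith [norm_nonneg (A * B), norm_nonneg C,
        mul_le_mul_of_nonneg_left hC (norm_nonneg (A * B))]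
  _ ≤ ‖A‖ * ‖B‖ := Matrix.l2_opNorm_mul _ _
  _ ≤ ‖B‖ := by
      nlinarith [norm_nonneg A, norm_nonneg B,
        mul_le_mul_of_nonneg_right hA (norm_nonneg B)]

/-- conjugation by an isometry preserves the norm. -/
lemma norm_conj {E : Matrix p q ℝ} (hE : Eᵀ * E = 1) (N : Matrix q q ℝ) :
    ‖E * N * Eᵀ‖ = ‖N‖ := by
  have hEn : ‖E‖ ≤ 1 := norm_isometry hE
  have hETn : ‖Eᵀ‖ ≤ 1 := by rw [normT]; exact hEn
  have hle : ‖E * N * Eᵀ‖ ≤ ‖N‖ := norm_triple_le hEn hETn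
  have hge : ‖N‖ ≤ ‖E * N * Eᵀ‖ := by
    have hid : Eᵀ * (E * N * Eᵀ) * E = N := by
      rw [← Matrix.mul_assoc, ← Matrix.mul_assoc, hE, Matrix.one_mul, Matrix.mul_assoc, hE,
        Matrix.mul_one]
    calc ‖N‖ = ‖Eᵀ * (E * N * Eᵀ) * E‖ := by rw [hid]
    _ ≤ ‖E * N * Eᵀ‖ := norm_triple_le hETn hEn
  linarith

/-- centered quadratic identity. -/
lemma quadratic_identity (T : Matrix q q ℝ) (u v : ℝ) :
    (T - ((u + v) / 2) • (1 : Matrix q q ℝ)) * (T - ((u + v) / 2) • (1 : Matrix q q ℝ))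
      - (((v - u) / 2) ^ 2) • (1 : Matrix q q ℝ)
    = (T - u • (1 : Matrix q q ℝ)) * (T - v • (1 : Matrix q q ℝ)) := by
  simp only [Matrix.sub_mul, Matrix.mul_sub, smul_mul_assoc, mul_smul_comm, smul_smul,
    Matrix.mul_one, Matrix.one_mul]
  module

end DKaux
open DKaux in
/-- Davis–Kahan `sin Θ` bound: if `Ē` is an orthonormal block of eigenvectors of the
symmetric matrix `G` with eigenvalues in `[a,b]`, and `Ē°` is the orthonormal block of
eigenvectors of the symmetric matrix `G°` whose eigenvalues lie in `[a,b]`, the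
remaining eigenvalues of `G°` lying outside `[a−Δ, b+Δ]`, then
`‖Ē°Ē°' − ĒĒ'‖ ≤ 2‖(G−G°)Ē‖/Δ ≤ 2‖G−G°‖/Δ`. -/
theorem stmt_9 (m d e : ℕ) (G G0 : Matrix (Fin m) (Fin m) ℝ)
    (hG : G.IsHermitian) (hG0 : G0.IsHermitian)
    (E : Matrix (Fin m) (Fin d) ℝ) (L : Matrix (Fin d) (Fin d) ℝ)
    (E0 : Matrix (Fin m) (Fin d) ℝ) (L0 : Matrix (Fin d) (Fin d) ℝ)
    (E0c : Matrix (Fin m) (Fin e) ℝ) (L0c : Matrix (Fin e) (Fin e) ℝ)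
    (a b Δ : ℝ) (hΔ : 0 < Δ) (hab : a ≤ b)
    (hEorth : Eᵀ * E = 1) (hE0orth : E0ᵀ * E0 = 1)
    (hinv : G * E = E * L) (hinv0 : G0 * E0 = E0 * L0)
    (hinv0c : G0 * E0c = E0c * L0c)
    (hspan : E0 * E0ᵀ + E0c * E0cᵀ = 1)
    (hLsym : L.IsHermitian) (hL0csym : L0c.IsHermitian)
    (hLa : (L - a • 1).PosSemidef) (hLb : (b • (1 : Matrix (Fin d) (Fin d) ℝ) - L).PosSemidef)
    (hL0a : (L0 - a • 1).PosSemidef)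
    (hL0b : (b • (1 : Matrix (Fin d) (Fin d) ℝ) - L0).PosSemidef)
    (hgap : ((L0c - (a - Δ) • (1 : Matrix (Fin e) (Fin e) ℝ)) *
             (L0c - (b + Δ) • (1 : Matrix (Fin e) (Fin e) ℝ))).PosSemidef) :
    ‖E0 * E0ᵀ - E * Eᵀ‖ ≤ 2 * ‖(G - G0) * E‖ / Δ
    ∧ 2 * ‖(G - G0) * E‖ / Δ ≤ 2 * ‖G - G0‖ / Δ := by
  have hG0t : G0ᵀ = G0 := by
    have := hG0; rwa [Matrix.IsHermitian, conjTranspose_eq_transpose_of_trivial] at this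
  have hLt : Lᵀ = L := by
    have := hLsym; rwa [Matrix.IsHermitian, conjTranspose_eq_transpose_of_trivial] at this
  have hL0ct : L0cᵀ = L0c := by
    have := hL0csym; rwa [Matrix.IsHermitian, conjTranspose_eq_transpose_of_trivial] at this
  -- basic contraction bounds
  have hEn : ‖E‖ ≤ 1 := norm_isometry hEorth
  have hETn : ‖Eᵀ‖ ≤ 1 := by rw [normT]; exact hEn
  have hE0n : ‖E0‖ ≤ 1 := norm_isometry hE0orth
  have hE0Tn : ‖E0ᵀ‖ ≤ 1 := by rw [normT]; exact hE0n
  have hP0psd : (E0 * E0ᵀ).PosSemidef := by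
    rw [← conjTranspose_eq_transpose_of_trivial]
    exact Matrix.posSemidef_self_mul_conjTranspose E0
  have hPcpsd : (E0c * E0cᵀ).PosSemidef := by
    rw [← conjTranspose_eq_transpose_of_trivial]
    exact Matrix.posSemidef_self_mul_conjTranspose E0c
  have hPcn : ‖E0c * E0cᵀ‖ ≤ 1 := by
    refine norm_le_of_sandwich (by rw [transpose_mul, transpose_transpose]) zero_le_one ?_ ?_
    · have h1 : (1 : ℝ) • (1 : Matrix (Fin m) (Fin m) ℝ) - E0c * E0cᵀ = E0 * E0ᵀ := by
        rw [one_smul, ← hspan]; abel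
      rw [h1]; exact hP0psd
    · refine psd_of_quadform ?_ fun x => ?_
      · rw [transpose_add, transpose_smul, transpose_one, transpose_mul, transpose_transpose]
      · rw [quad_expand']
        have := quadform_nonneg hPcpsd x
        nlinarith [norm_nonneg (ev x)]
  have hE0cn : ‖E0c‖ ≤ 1 := by
    have h1 : ‖E0cᵀᵀ * E0cᵀ‖ = ‖E0cᵀ‖ * ‖E0cᵀ‖ := norm_sq_eq E0cᵀ
    rw [transpose_transpose, normT] at h1
    nlinarith [norm_nonneg E0c]
  have hE0cTn : ‖E0cᵀ‖ ≤ 1 := by rw [normT]; exact hE0cn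
  -- Sylvester-equation bound for `X := E0cᵀ * E`
  set X : Matrix (Fin e) (Fin d) ℝ := E0cᵀ * E with hX
  set R : Matrix (Fin m) (Fin d) ℝ := (G - G0) * E with hR
  set S : Matrix (Fin e) (Fin d) ℝ := E0cᵀ * R with hS
  have hSR : ‖S‖ ≤ ‖R‖ := by
    calc ‖S‖ ≤ ‖E0cᵀ‖ * ‖R‖ := Matrix.l2_opNorm_mul _ _
    _ ≤ ‖R‖ := by nlinarith [norm_nonneg R, mul_le_mul_of_nonneg_right hE0cTn (norm_nonneg R)]
  set cc : ℝ := (a + b) / 2 with hcc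
  set rr : ℝ := (b - a) / 2 with hrr
  set ρ : ℝ := (b - a) / 2 + Δ with hρdef
  have hrr0 : 0 ≤ rr := by rw [hrr]; linarith
  have hρ0 : 0 < ρ := by rw [hρdef]; linarith
  have hBnorm : ‖L - cc • (1 : Matrix (Fin d) (Fin d) ℝ)‖ ≤ rr := by
    refine norm_le_of_sandwich ?_ hrr0 ?_ ?_
    · rw [transpose_sub, transpose_smul, transpose_one, hLt]
    · have h1 : rr • (1 : Matrix (Fin d) (Fin d) ℝ) - (L - cc • 1)
          = b • (1 : Matrix (Fin d) (Fin d) ℝ) - L := by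
        rw [show b • (1 : Matrix (Fin d) (Fin d) ℝ) = rr • 1 + cc • 1 by
          rw [← add_smul]; congr 1; rw [hrr, hcc]; ring]
        abel
      rw [h1]; exact hLb
    · have h2 : L - cc • (1 : Matrix (Fin d) (Fin d) ℝ) + rr • 1
          = L - a • (1 : Matrix (Fin d) (Fin d) ℝ) := by
        rw [show a • (1 : Matrix (Fin d) (Fin d) ℝ) = cc • 1 - rr • 1 by
          rw [← sub_smul]; congr 1; rw [hrr, hcc]; ring]
        abel
      rw [h2]; exact hLa
  have hAA : ((L0c - cc • (1 : Matrix (Fin e) (Fin e) ℝ)) * (L0c - cc • 1)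
      - ρ ^ 2 • (1 : Matrix (Fin e) (Fin e) ℝ)).PosSemidef := by
    have hid := quadratic_identity L0c (a - Δ) (b + Δ)
    rw [show ((a - Δ) + (b + Δ)) / 2 = cc by rw [hcc]; ring,
      show ((b + Δ) - (a - Δ)) / 2 = ρ by rw [hρdef]; ring] at hid
    rw [hid]; exact hgap
  have hAt : (L0c - cc • (1 : Matrix (Fin e) (Fin e) ℝ))ᵀ = L0c - cc • 1 := by
    rw [transpose_sub, transpose_smul, transpose_one, hL0ct]
  have hAlow : ∀ x : Fin e → ℝ,
      ρ * ‖ev x‖ ≤ ‖ev ((L0c - cc • (1 : Matrix (Fin e) (Fin e) ℝ)) *ᵥ x)‖ := by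
    intro x
    refine mulVec_lower hρ0.le ?_ x
    rw [hAt]; exact hAA
  have hcomm : E0cᵀ * G0 = L0c * E0cᵀ := by
    have h := congrArg Matrix.transpose hinv0c
    rwa [transpose_mul, transpose_mul, hG0t, hL0ct] at h
  have hSyl : (L0c - cc • (1 : Matrix (Fin e) (Fin e) ℝ)) * X
      = X * (L - cc • (1 : Matrix (Fin d) (Fin d) ℝ)) - S := by
    have h1 : L0c * X = E0cᵀ * G0 * E := by
      rw [hX, ← Matrix.mul_assoc, hcomm]
    have h2 : X * L = E0cᵀ * G * E := by
      rw [hX, Matrix.mul_assoc, ← hinv, ← Matrix.mul_assoc]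
    have h3 : S = E0cᵀ * G * E - E0cᵀ * G0 * E := by
      rw [hS, hR, ← Matrix.mul_assoc, Matrix.mul_sub, Matrix.sub_mul]
    have e1 : (L0c - cc • (1 : Matrix (Fin e) (Fin e) ℝ)) * X = L0c * X - cc • X := by
      rw [Matrix.sub_mul, Matrix.smul_mul, Matrix.one_mul]
    have e2 : X * (L - cc • (1 : Matrix (Fin d) (Fin d) ℝ)) = X * L - cc • X := by
      rw [Matrix.mul_sub, Matrix.mul_smul, Matrix.mul_one]
    rw [e1, e2, h1, h2, h3]
    abel
  have hXBS : ‖X * (L - cc • (1 : Matrix (Fin d) (Fin d) ℝ)) - S‖ ≤ ‖X‖ * rr + ‖S‖ := by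
    calc ‖X * (L - cc • (1 : Matrix (Fin d) (Fin d) ℝ)) - S‖
        ≤ ‖X * (L - cc • (1 : Matrix (Fin d) (Fin d) ℝ))‖ + ‖S‖ := norm_sub_le _ _
    _ ≤ ‖X‖ * rr + ‖S‖ := by
        have h1 : ‖X * (L - cc • (1 : Matrix (Fin d) (Fin d) ℝ))‖
            ≤ ‖X‖ * ‖L - cc • (1 : Matrix (Fin d) (Fin d) ℝ)‖ := Matrix.l2_opNorm_mul _ _
        nlinarith [norm_nonneg X, mul_le_mul_of_nonneg_left hBnorm (norm_nonneg X)]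
  have hXle : ‖X‖ ≤ (‖X‖ * rr + ‖S‖) / ρ := by
    refine norm_le_of_forall _ (by positivity) fun v => ?_
    have l1 := hAlow (X *ᵥ v)
    have l2 : (L0c - cc • (1 : Matrix (Fin e) (Fin e) ℝ)) *ᵥ (X *ᵥ v)
        = (X * (L - cc • (1 : Matrix (Fin d) (Fin d) ℝ)) - S) *ᵥ v := by
      rw [Matrix.mulVec_mulVec, hSyl]
    have l3 := norm_mulVec_le (X * (L - cc • (1 : Matrix (Fin d) (Fin d) ℝ)) - S) v
    rw [l2] at l1
    rw [div_mul_eq_mul_div, le_div_iff₀ hρ0]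
    nlinarith [norm_nonneg (ev v), mul_le_mul_of_nonneg_right hXBS (norm_nonneg (ev v))]
  have hXfin : ‖X‖ ≤ ‖S‖ / Δ := by
    have h1 : ‖X‖ * ρ ≤ ‖X‖ * rr + ‖S‖ := (le_div_iff₀ hρ0).mp hXle
    rw [le_div_iff₀ hΔ]
    rw [hρdef, hrr] at *
    nlinarith
  -- sin Θ bound via `X`
  have hPcP : ‖E0c * E0cᵀ * (E * Eᵀ)‖ ≤ ‖X‖ := by
    have hEq : E0c * E0cᵀ * (E * Eᵀ) = E0c * X * Eᵀ := by
      rw [hX, Matrix.mul_assoc, Matrix.mul_assoc, Matrix.mul_assoc]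
    rw [hEq]
    exact norm_triple_le hE0cn hETn
  set M : Matrix (Fin d) (Fin d) ℝ := E0ᵀ * E with hM
  have hMn : ‖M‖ ≤ 1 := by
    calc ‖M‖ ≤ ‖E0ᵀ‖ * ‖E‖ := Matrix.l2_opNorm_mul _ _
    _ ≤ 1 := by nlinarith [norm_nonneg E, mul_le_mul_of_nonneg_right hE0Tn (norm_nonneg E)]
  have hPcProj : (1 : Matrix (Fin m) (Fin m) ℝ) - E0 * E0ᵀ = E0c * E0cᵀ := by
    rw [← hspan]; abel
  -- cancellation helpers
  have hEEm : ∀ B : Matrix (Fin d) (Fin m) ℝ, Eᵀ * (E * B) = B := fun B => by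
    rw [← Matrix.mul_assoc, hEorth, Matrix.one_mul]
  have hE0E0m : ∀ B : Matrix (Fin d) (Fin m) ℝ, E0ᵀ * (E0 * B) = B := fun B => by
    rw [← Matrix.mul_assoc, hE0orth, Matrix.one_mul]
  -- claim A : ‖Pc P‖² = ‖1 - MᵀM‖
  have hA1 : (E0c * E0cᵀ * (E * Eᵀ))ᵀ * (E0c * E0cᵀ * (E * Eᵀ))
      = E * ((1 : Matrix (Fin d) (Fin d) ℝ) - Mᵀ * M) * Eᵀ := by
    have ht : E0c * E0cᵀ * (E * Eᵀ)
        = ((1 : Matrix (Fin m) (Fin m) ℝ) - E0 * E0ᵀ) * (E * Eᵀ) := by rw [hPcProj]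
    rw [ht, hM]
    simp only [transpose_mul, transpose_sub, transpose_one, transpose_transpose,
      Matrix.mul_sub, Matrix.sub_mul, Matrix.mul_one, Matrix.one_mul, Matrix.mul_assoc,
      hEEm, hE0E0m]
    abel
  have claimA : ‖E0c * E0cᵀ * (E * Eᵀ)‖ * ‖E0c * E0cᵀ * (E * Eᵀ)‖
      = ‖(1 : Matrix (Fin d) (Fin d) ℝ) - Mᵀ * M‖ := by
    rw [← norm_sq_eq, hA1, norm_conj hEorth]
  -- claim B : ‖(1-P) P0‖² = ‖1 - MMᵀ‖
  have hB1 : (((1 : Matrix (Fin m) (Fin m) ℝ) - E * Eᵀ) * (E0 * E0ᵀ))ᵀ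
      * (((1 : Matrix (Fin m) (Fin m) ℝ) - E * Eᵀ) * (E0 * E0ᵀ))
      = E0 * ((1 : Matrix (Fin d) (Fin d) ℝ) - M * Mᵀ) * E0ᵀ := by
    rw [hM]
    simp only [transpose_mul, transpose_sub, transpose_one, transpose_transpose,
      Matrix.mul_sub, Matrix.sub_mul, Matrix.mul_one, Matrix.one_mul, Matrix.mul_assoc,
      hEEm, hE0E0m]
    abel
  have claimB : ‖((1 : Matrix (Fin m) (Fin m) ℝ) - E * Eᵀ) * (E0 * E0ᵀ)‖
      * ‖((1 : Matrix (Fin m) (Fin m) ℝ) - E * Eᵀ) * (E0 * E0ᵀ)‖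
      = ‖(1 : Matrix (Fin d) (Fin d) ℝ) - M * Mᵀ‖ := by
    rw [← norm_sq_eq, hB1, norm_conj hE0orth]
  have claimC := norm_one_sub_swap hMn
  have hswap : ‖((1 : Matrix (Fin m) (Fin m) ℝ) - E * Eᵀ) * (E0 * E0ᵀ)‖
      ≤ ‖E0c * E0cᵀ * (E * Eᵀ)‖ := by
    nlinarith [norm_nonneg (((1 : Matrix (Fin m) (Fin m) ℝ) - E * Eᵀ) * (E0 * E0ᵀ)),
      norm_nonneg (E0c * E0cᵀ * (E * Eᵀ))]
  -- final assembly
  have hdecomp : E0 * E0ᵀ - E * Eᵀ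
      = E0 * E0ᵀ * ((1 : Matrix (Fin m) (Fin m) ℝ) - E * Eᵀ)
        - ((1 : Matrix (Fin m) (Fin m) ℝ) - E0 * E0ᵀ) * (E * Eᵀ) := by
    rw [Matrix.mul_sub, Matrix.sub_mul, Matrix.mul_one, Matrix.one_mul]
    abel
  have htransp : ‖E0 * E0ᵀ * ((1 : Matrix (Fin m) (Fin m) ℝ) - E * Eᵀ)‖
      = ‖((1 : Matrix (Fin m) (Fin m) ℝ) - E * Eᵀ) * (E0 * E0ᵀ)‖ := by
    rw [← normT (((1 : Matrix (Fin m) (Fin m) ℝ) - E * Eᵀ) * (E0 * E0ᵀ))]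
    congr 1
    simp [transpose_mul, transpose_sub, Matrix.mul_assoc]
  have hmain : ‖E0 * E0ᵀ - E * Eᵀ‖ ≤ 2 * ‖X‖ := by
    rw [hdecomp]
    calc ‖E0 * E0ᵀ * ((1 : Matrix (Fin m) (Fin m) ℝ) - E * Eᵀ)
        - ((1 : Matrix (Fin m) (Fin m) ℝ) - E0 * E0ᵀ) * (E * Eᵀ)‖
        ≤ ‖E0 * E0ᵀ * ((1 : Matrix (Fin m) (Fin m) ℝ) - E * Eᵀ)‖
          + ‖((1 : Matrix (Fin m) (Fin m) ℝ) - E0 * E0ᵀ) * (E * Eᵀ)‖ := norm_sub_le _ _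
    _ ≤ 2 * ‖X‖ := by
        rw [htransp, hPcProj]
        linarith [hswap, hPcP]
  have hRfin : ‖R‖ ≤ ‖G - G0‖ := by
    have h := Matrix.l2_opNorm_mul (G - G0) E
    rw [← hR] at h
    nlinarith [norm_nonneg (G - G0), mul_le_mul_of_nonneg_left hEn (norm_nonneg (G - G0))]
  have hdiv1 : ‖S‖ / Δ ≤ ‖R‖ / Δ := (div_le_div_iff_of_pos_right hΔ).mpr hSR
  have hdiv2 : 2 * ‖R‖ / Δ ≤ 2 * ‖G - G0‖ / Δ := by
    apply (div_le_div_iff_of_pos_right hΔ).mpr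
    linarith
  refine ⟨?_, hdiv2⟩
  calc ‖E0 * E0ᵀ - E * Eᵀ‖ ≤ 2 * ‖X‖ := hmain
  _ ≤ 2 * (‖S‖ / Δ) := by linarith
  _ ≤ 2 * (‖R‖ / Δ) := by linarith
  _ = 2 * ‖R‖ / Δ := by rw [mul_div_assoc]
end

section
/- Let R ∈ ℝ^{d×d} satisfy R = U'V where U, V ∈ ℝ^{m×d} have orthonormal columns, and let sgn(R) denote its matrix sign function (the orthogonal factor in its polar decomposition). Then ‖R − sgn(R)‖_op ≤ ‖UU' − VV'‖_op²; i.e., the alignment matrix between two nearby orthonormal frames is close to an orthogonal matrix, with error quadratic in the subspace distance. -/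
open Matrix
open scoped Matrix.Norms.L2Operator

lemma abbe_esq {k : ℕ} (y : Fin k → ℝ) :
    ‖((WithLp.equiv 2 (Fin k → ℝ)).symm y : EuclideanSpace ℝ (Fin k))‖ ^ 2 = y ⬝ᵥ y := by
  rw [EuclideanSpace.norm_eq, Real.sq_sqrt (by positivity)]
  simp [dotProduct, Real.norm_eq_abs, sq_abs, sq]

lemma abbe_opnorm_le {a b : ℕ} (M : Matrix (Fin a) (Fin b) ℝ) {c : ℝ} (hc : 0 ≤ c)
    (h : ∀ x : Fin b → ℝ, (M *ᵥ x) ⬝ᵥ (M *ᵥ x) ≤ c ^ 2 * (x ⬝ᵥ x)) : ‖M‖ ≤ c := by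
  rw [Matrix.l2_opNorm_def]
  refine ContinuousLinearMap.opNorm_le_bound _ hc fun x => ?_
  have hx : x = (WithLp.equiv 2 (Fin b → ℝ)).symm (WithLp.equiv 2 (Fin b → ℝ) x) := rfl
  set y : Fin b → ℝ := WithLp.equiv 2 (Fin b → ℝ) x with hy
  have h1 : ‖(Matrix.toEuclideanLin ≪≫ₗ LinearMap.toContinuousLinearMap) M x‖ ^ 2
      = (M *ᵥ y) ⬝ᵥ (M *ᵥ y) := by
    have : (Matrix.toEuclideanLin ≪≫ₗ LinearMap.toContinuousLinearMap) M x
        = ((WithLp.equiv 2 (Fin a → ℝ)).symm (M *ᵥ y) : EuclideanSpace ℝ (Fin a)) := rfl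
    rw [this, abbe_esq]
  have h2 : ‖x‖ ^ 2 = y ⬝ᵥ y := by rw [hx]; exact abbe_esq y
  have := h y
  nlinarith [norm_nonneg ((Matrix.toEuclideanLin ≪≫ₗ LinearMap.toContinuousLinearMap) M x),
    norm_nonneg x, mul_nonneg hc (norm_nonneg x)]

lemma abbe_orth_norm_le {a b : ℕ} (M : Matrix (Fin a) (Fin b) ℝ) (hM : Mᵀ * M = 1) :
    ‖M‖ ≤ 1 := by
  refine abbe_opnorm_le M zero_le_one fun x => ?_
  have : (M *ᵥ x) ⬝ᵥ (M *ᵥ x) = x ⬝ᵥ x := by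
    rw [Matrix.dotProduct_mulVec, ← Matrix.mulVec_transpose, Matrix.mulVec_mulVec, hM,
      Matrix.one_mulVec]
  rw [this]; nlinarith

set_option maxHeartbeats 1000000 in
/-- Lemma 2 of Abbe et al. (2020): for orthonormal frames `U, V ∈ ℝ^{m×d}` with
`R = U'V` having polar/singular decomposition `R = A·diag(S)·B'` (`A, B` orthogonal,
`S ≥ 0`), the matrix sign function `sgn(R) = A·B'` satisfies
`‖R − sgn(R)‖_op ≤ ‖UU' − VV'‖_op²`. -/
theorem stmt_11 (m d : ℕ) (U V : Matrix (Fin m) (Fin d) ℝ)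
    (hU : Uᵀ * U = 1) (hV : Vᵀ * V = 1)
    (R : Matrix (Fin d) (Fin d) ℝ) (hR : R = Uᵀ * V)
    (A B : Matrix (Fin d) (Fin d) ℝ) (S : Fin d → ℝ)
    (hA : Aᵀ * A = 1) (hB : Bᵀ * B = 1) (hS : ∀ i, 0 ≤ S i)
    (hpolar : R = A * Matrix.diagonal S * Bᵀ) :
    ‖R - A * Bᵀ‖ ≤ ‖U * Uᵀ - V * Vᵀ‖ ^ 2 := by
  set c : ℝ := ‖U * Uᵀ - V * Vᵀ‖ with hc
  have hc0 : 0 ≤ c := norm_nonneg _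
  have e1 : Uᵀ * V = A * Matrix.diagonal S * Bᵀ := by rw [← hR, hpolar]
  set M : Matrix (Fin m) (Fin d) ℝ := U * A with hMdef
  set N : Matrix (Fin m) (Fin d) ℝ := V * B with hNdef
  have hMM : Mᵀ * M = 1 := by
    rw [hMdef, Matrix.transpose_mul, Matrix.mul_assoc, ← Matrix.mul_assoc Uᵀ U A, hU,
      Matrix.one_mul, hA]
  have hNN : Nᵀ * N = 1 := by
    rw [hNdef, Matrix.transpose_mul, Matrix.mul_assoc, ← Matrix.mul_assoc Vᵀ V B, hV,
      Matrix.one_mul, hB]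
  have hMN : Mᵀ * N = Matrix.diagonal S := by
    rw [hMdef, hNdef, Matrix.transpose_mul, Matrix.mul_assoc, ← Matrix.mul_assoc Uᵀ V B, e1]
    simp only [Matrix.mul_assoc, hB, Matrix.mul_one]
    rw [← Matrix.mul_assoc, hA, Matrix.one_mul]
  -- columns dot products
  have col : ∀ (X Y : Matrix (Fin m) (Fin d) ℝ) (i : Fin d),
      ∑ j, X j i * Y j i = (Xᵀ * Y) i i := by
    intro X Y i
    simp [Matrix.mul_apply, Matrix.transpose_apply]
  have cMM : ∀ i, ∑ j, M j i * M j i = 1 := by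
    intro i; rw [col, hMM]; simp
  have cNN : ∀ i, ∑ j, N j i * N j i = 1 := by
    intro i; rw [col, hNN]; simp
  have cMN : ∀ i, ∑ j, M j i * N j i = S i := by
    intro i; rw [col, hMN]; simp
  -- S i ≤ 1
  have hS1 : ∀ i, S i ≤ 1 := by
    intro i
    have h0 : (0:ℝ) ≤ ∑ j, (M j i - N j i) * (M j i - N j i) :=
      Finset.sum_nonneg fun j _ => mul_self_nonneg _
    have hexp : ∑ j, (M j i - N j i) * (M j i - N j i)
        = (∑ j, M j i * M j i) - 2 * (∑ j, M j i * N j i) + ∑ j, N j i * N j i := by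
      rw [Finset.sum_congr rfl fun j _ => (by ring :
        (M j i - N j i) * (M j i - N j i)
          = (M j i * M j i - 2 * (M j i * N j i)) + N j i * N j i)]
      rw [Finset.sum_add_distrib, Finset.sum_sub_distrib, ← Finset.mul_sum]
    rw [hexp, cMM, cNN, cMN] at h0
    linarith
  -- key: 1 - S i ^ 2 ≤ c ^ 2
  have key : ∀ i, 1 - S i ^ 2 ≤ c ^ 2 := by
    intro i
    set e : Fin d → ℝ := Pi.single i 1 with he
    have h1 : (U * Uᵀ - V * Vᵀ) * N = M * Matrix.diagonal S - N := by
      rw [Matrix.sub_mul]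
      congr 1
      · rw [hNdef, hMdef, ← Matrix.mul_assoc (U*Uᵀ) V B, Matrix.mul_assoc U Uᵀ V, e1]
        simp only [Matrix.mul_assoc, hB, Matrix.mul_one]
      · rw [hNdef, ← Matrix.mul_assoc (V*Vᵀ) V B, Matrix.mul_assoc V Vᵀ V, hV, Matrix.mul_one]
    set w : Fin m → ℝ := (U * Uᵀ - V * Vᵀ) *ᵥ (N *ᵥ e) with hw
    have hwval : ∀ j, w j = M j i * S i - N j i := by
      intro j
      rw [hw, Matrix.mulVec_mulVec, h1, he, Matrix.mulVec_single]
      simp [Matrix.sub_apply, Matrix.mul_diagonal]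
    have hww : w ⬝ᵥ w = 1 - S i ^ 2 := by
      have : w ⬝ᵥ w = ∑ j, (M j i * S i - N j i) * (M j i * S i - N j i) := by
        simp only [dotProduct]
        exact Finset.sum_congr rfl fun j _ => by rw [hwval j]
      rw [this]
      have hexp : ∑ j, (M j i * S i - N j i) * (M j i * S i - N j i)
          = S i ^ 2 * (∑ j, M j i * M j i) - (2 * S i) * (∑ j, M j i * N j i)
            + ∑ j, N j i * N j i := by
        rw [Finset.sum_congr rfl fun j _ => (by ring :
          (M j i * S i - N j i) * (M j i * S i - N j i)
            = (S i ^ 2 * (M j i * M j i) - (2 * S i) * (M j i * N j i)) + N j i * N j i)]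
        rw [Finset.sum_add_distrib, Finset.sum_sub_distrib, ← Finset.mul_sum, ← Finset.mul_sum]
      rw [hexp, cMM, cNN, cMN]; ring
    have hvv : (N *ᵥ e) ⬝ᵥ (N *ᵥ e) = 1 := by
      have : (N *ᵥ e) ⬝ᵥ (N *ᵥ e) = e ⬝ᵥ e := by
        rw [Matrix.dotProduct_mulVec, ← Matrix.mulVec_transpose, Matrix.mulVec_mulVec, hNN,
          Matrix.one_mulVec]
      rw [this, he]
      simp [dotProduct, Pi.single_apply]
    -- norms
    have hbound := Matrix.l2_opNorm_mulVec (U * Uᵀ - V * Vᵀ)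
      ((WithLp.equiv 2 (Fin m → ℝ)).symm (N *ᵥ e))
    have hnv : ‖((WithLp.equiv 2 (Fin m → ℝ)).symm (N *ᵥ e) : EuclideanSpace ℝ (Fin m))‖ = 1 := by
      have := abbe_esq (N *ᵥ e)
      rw [hvv] at this
      nlinarith [norm_nonneg ((WithLp.equiv 2 (Fin m → ℝ)).symm (N *ᵥ e) : EuclideanSpace ℝ (Fin m))]
    have hnw : ‖((WithLp.equiv 2 (Fin m → ℝ)).symm w : EuclideanSpace ℝ (Fin m))‖ ^ 2
        = 1 - S i ^ 2 := by rw [abbe_esq, hww]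
    have hEq : (EuclideanSpace.equiv (Fin m) ℝ).symm
          ((U * Uᵀ - V * Vᵀ) *ᵥ ((WithLp.equiv 2 (Fin m → ℝ)).symm (N *ᵥ e)))
        = ((WithLp.equiv 2 (Fin m → ℝ)).symm w : EuclideanSpace ℝ (Fin m)) := rfl
    rw [hEq, hnv, mul_one] at hbound
    calc 1 - S i ^ 2 = ‖((WithLp.equiv 2 (Fin m → ℝ)).symm w : EuclideanSpace ℝ (Fin m))‖ ^ 2 :=
          hnw.symm
      _ ≤ c ^ 2 := by nlinarith [norm_nonneg ((WithLp.equiv 2 (Fin m → ℝ)).symm w :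
          EuclideanSpace ℝ (Fin m))]
  -- rewrite R - A Bᵀ
  have hDiag : R - A * Bᵀ = A * Matrix.diagonal (fun i => S i - 1) * Bᵀ := by
    have h2 : Matrix.diagonal (fun i => S i - 1) = Matrix.diagonal S - 1 := by
      rw [← Matrix.diagonal_one, ← Matrix.diagonal_sub]
    rw [hpolar, h2, Matrix.mul_sub, Matrix.mul_one, Matrix.sub_mul]
  have hDnorm : ‖Matrix.diagonal (fun i => S i - 1)‖ ≤ c ^ 2 := by
    refine abbe_opnorm_le _ (by positivity) fun x => ?_
    simp only [dotProduct, Matrix.mulVec_diagonal]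
    calc ∑ j, (S j - 1) * x j * ((S j - 1) * x j)
        ≤ ∑ j, (c ^ 2) ^ 2 * (x j * x j) := by
          refine Finset.sum_le_sum fun j _ => ?_
          have h1 : 1 - S j ≤ c ^ 2 := by nlinarith [key j, hS j, hS1 j]
          have h4 : (1 - S j) * (1 - S j) ≤ c ^ 2 * (c ^ 2) :=
            mul_le_mul h1 h1 (by linarith [hS1 j]) (by positivity)
          nlinarith [mul_le_mul_of_nonneg_right h4 (mul_self_nonneg (x j))]
      _ = (c ^ 2) ^ 2 * ∑ j, x j * x j := by rw [Finset.mul_sum]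
  have hAn : ‖A‖ ≤ 1 := abbe_orth_norm_le A hA
  have hBn : ‖Bᵀ‖ ≤ 1 := by
    refine abbe_orth_norm_le Bᵀ ?_
    rw [Matrix.transpose_transpose]
    exact mul_eq_one_comm.mp hB
  calc ‖R - A * Bᵀ‖ = ‖A * Matrix.diagonal (fun i => S i - 1) * Bᵀ‖ := by rw [hDiag]
    _ ≤ ‖A * Matrix.diagonal (fun i => S i - 1)‖ * ‖Bᵀ‖ := Matrix.l2_opNorm_mul _ _
    _ ≤ ‖A‖ * ‖Matrix.diagonal (fun i => S i - 1)‖ * ‖Bᵀ‖ := by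
        have := Matrix.l2_opNorm_mul A (Matrix.diagonal (fun i => S i - 1))
        have hb0 : (0:ℝ) ≤ ‖Bᵀ‖ := norm_nonneg _
        nlinarith
    _ ≤ c ^ 2 := by
        have h1 : (0:ℝ) ≤ ‖A‖ := norm_nonneg _
        have h2 : (0:ℝ) ≤ ‖Matrix.diagonal (fun i => S i - 1)‖ := norm_nonneg _
        have h3 : (0:ℝ) ≤ ‖Bᵀ‖ := norm_nonneg _
        have p1 : ‖A‖ * ‖Matrix.diagonal (fun i => S i - 1)‖ ≤ c ^ 2 := by nlinarith
        have p2 : ‖A‖ * ‖Matrix.diagonal (fun i => S i - 1)‖ * ‖Bᵀ‖ ≤ c ^ 2 * 1 :=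
          mul_le_mul p1 hBn h3 (by positivity)
        linarith
end

section
/- Let F̂ ∈ ℝ^{p×d} with (1/p)F̂'F̂ = I_d be the matrix of d leading scaled left singular vectors of X ∈ ℝ^{p×K}, and F ∈ ℝ^{p×d} a matrix with s_min((1/p)F'F) ≥ c_F > 0. Define R = (1/p)F'F̂. If the projection matrices satisfy ‖P_{F̂} − P_F‖_op ≤ ε < 1, then s_min(R·R') = s_min((1/p)F'P_{F̂}F) ≥ c_F·(1 − ε)² > 0; in particular R is invertible and s_max(R), s_min(R)^{−1} are bounded in terms of c_F, s_max((1/p)F'F), and ε. -/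
open Matrix
open scoped Matrix.Norms.L2Operator

private lemma dot_self_eq_norm_sq {n : ℕ} (u : Fin n → ℝ) :
    u ⬝ᵥ u = ‖(EuclideanSpace.equiv (Fin n) ℝ).symm u‖ ^ 2 := by
  rw [← real_inner_self_eq_norm_sq]
  simp [PiLp.inner_apply, dotProduct, RCLike.inner_apply, mul_comm]
  rw [EuclideanSpace.norm_eq, Real.sq_sqrt (by positivity)]
  simp [sq, Real.norm_eq_abs]

/-- Conditioning of the PCA rotation matrix: if `(1/p)F̂'F̂ = I`, `s_min((1/p)F'F) ≥ c_F`,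
and the projections onto the column spaces of `F̂` and `F` satisfy `‖P_F̂ − P_F‖ ≤ ε < 1`,
then `R = (1/p)F'F̂` satisfies `R·R' = (1/p)F'P_F̂F`, `s_min(R·R') ≥ c_F·(1−ε)²`, and in
particular `R` is invertible. -/
theorem stmt_18 (p d : ℕ) (hp : 0 < p)
    (Fhat F : Matrix (Fin p) (Fin d) ℝ)
    (hFhat : (p : ℝ)⁻¹ • (Fhatᵀ * Fhat) = 1)
    (cF ε : ℝ) (hcF : 0 < cF) (hε0 : 0 ≤ ε) (hε1 : ε < 1)
    (hFmin : ((p : ℝ)⁻¹ • (Fᵀ * F) - cF • 1).PosSemidef)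
    (PF PFhat : Matrix (Fin p) (Fin p) ℝ)
    (hPF : PF = F * (Fᵀ * F)⁻¹ * Fᵀ)
    (hPFhat : PFhat = (p : ℝ)⁻¹ • (Fhat * Fhatᵀ))
    (hproj : ‖PFhat - PF‖ ≤ ε)
    (R : Matrix (Fin d) (Fin d) ℝ) (hR : R = (p : ℝ)⁻¹ • (Fᵀ * Fhat)) :
    R * Rᵀ = (p : ℝ)⁻¹ • (Fᵀ * PFhat * F)
    ∧ (R * Rᵀ - (cF * (1 - ε) ^ 2) • 1).PosSemidef
    ∧ IsUnit R.det := by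
  have hp0 : (0:ℝ) < p := by exact_mod_cast hp
  have hpne : (p:ℝ) ≠ 0 := hp0.ne'
  -- F̂ᵀF̂ = p • 1
  have hFtF : Fhatᵀ * Fhat = (p:ℝ) • (1 : Matrix (Fin d) (Fin d) ℝ) := by
    calc Fhatᵀ * Fhat = (p:ℝ) • ((p:ℝ)⁻¹ • (Fhatᵀ * Fhat)) := by
          rw [smul_smul, mul_inv_cancel₀ hpne, one_smul]
      _ = (p:ℝ) • 1 := by rw [hFhat]
  -- (1/p) FᵀF is positive definite
  have hFF : ((p : ℝ)⁻¹ • (Fᵀ * F)).PosDef := by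
    have h1 : ((cF • 1 : Matrix (Fin d) (Fin d) ℝ)).PosDef := by
      rw [Matrix.smul_one_eq_diagonal]
      exact Matrix.PosDef.diagonal (fun _ => hcF)
    have h2 := Matrix.PosDef.posSemidef_add hFmin h1
    rwa [sub_add_cancel] at h2
  -- det FᵀF is a unit
  have hdet : IsUnit (Fᵀ * F).det := by
    have h2 := hFF.det_pos
    rw [Matrix.det_smul, Fintype.card_fin] at h2
    have h3 : (0:ℝ) < (p:ℝ)⁻¹ ^ d := pow_pos (inv_pos.mpr hp0) d
    have h4 : (0:ℝ) < (Fᵀ * F).det := by nlinarith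
    exact h4.ne'.isUnit
  -- PF fixes the range of F
  have hPFmul : PF * F = F := by
    rw [hPF, Matrix.mul_assoc (F * (Fᵀ * F)⁻¹) Fᵀ F, Matrix.mul_assoc F (Fᵀ * F)⁻¹ (Fᵀ * F),
      Matrix.nonsing_inv_mul _ hdet, Matrix.mul_one]
  -- PFhat is a symmetric idempotent
  have hPsym : PFhatᵀ = PFhat := by
    rw [hPFhat]; simp [Matrix.transpose_smul, Matrix.transpose_mul]
  have hPP : PFhat * PFhat = PFhat := by
    rw [hPFhat, Matrix.smul_mul, Matrix.mul_smul, smul_smul, Matrix.mul_assoc,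
      ← Matrix.mul_assoc Fhatᵀ, hFtF]
    simp only [Matrix.smul_mul, Matrix.mul_smul, smul_smul, Matrix.mul_assoc,
      Matrix.one_mul]
    congr 1
    field_simp
  -- Part 1
  have hpart1 : R * Rᵀ = (p : ℝ)⁻¹ • (Fᵀ * PFhat * F) := by
    rw [hR, hPFhat]
    simp only [Matrix.transpose_smul, Matrix.transpose_mul, Matrix.transpose_transpose,
      Matrix.smul_mul, Matrix.mul_smul, smul_smul, Matrix.mul_assoc]
  -- Key quadratic-form bound
  have key : ∀ x : Fin d → ℝ,
      (cF * (1 - ε) ^ 2) * (x ⬝ᵥ x) ≤ x ⬝ᵥ ((R * Rᵀ) *ᵥ x) := by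
    intro x
    set y : Fin p → ℝ := F *ᵥ x with hy
    set w : Fin p → ℝ := PFhat *ᵥ y with hw
    have hyfix : PF *ᵥ y = y := by
      rw [hy, Matrix.mulVec_mulVec, hPFmul]
    -- operator norm bound
    have hop : ‖(EuclideanSpace.equiv (Fin p) ℝ).symm ((PFhat - PF) *ᵥ y)‖ ≤
        ε * ‖(EuclideanSpace.equiv (Fin p) ℝ).symm y‖ := by
      refine le_trans (Matrix.l2_opNorm_mulVec (PFhat - PF)
        ((EuclideanSpace.equiv (Fin p) ℝ).symm y)) ?_
      exact mul_le_mul_of_nonneg_right hproj (norm_nonneg _)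
    -- w = y + (PFhat - PF) y
    have hwy : w = y + (PFhat - PF) *ᵥ y := by
      rw [hw, Matrix.sub_mulVec, hyfix]; abel
    -- lower bound on ‖w‖
    have hnw : (1 - ε) * ‖(EuclideanSpace.equiv (Fin p) ℝ).symm y‖ ≤
        ‖(EuclideanSpace.equiv (Fin p) ℝ).symm w‖ := by
      have heq : (EuclideanSpace.equiv (Fin p) ℝ).symm y =
          (EuclideanSpace.equiv (Fin p) ℝ).symm w -
          (EuclideanSpace.equiv (Fin p) ℝ).symm ((PFhat - PF) *ᵥ y) := by
        rw [← map_sub]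
        congr 1
        rw [hwy]; abel
      have h8 : ‖(EuclideanSpace.equiv (Fin p) ℝ).symm y‖ ≤
          ‖(EuclideanSpace.equiv (Fin p) ℝ).symm w‖ +
          ‖(EuclideanSpace.equiv (Fin p) ℝ).symm ((PFhat - PF) *ᵥ y)‖ := by
        rw [heq]; exact norm_sub_le _ _
      nlinarith [hop, h8, norm_nonneg ((EuclideanSpace.equiv (Fin p) ℝ).symm y)]
    -- quadratic form identity
    have hquad : x ⬝ᵥ ((R * Rᵀ) *ᵥ x) = (p:ℝ)⁻¹ * (w ⬝ᵥ w) := by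
      rw [hpart1, Matrix.smul_mulVec, dotProduct_smul, smul_eq_mul]
      congr 1
      have h5 : (Fᵀ * PFhat * F) *ᵥ x = Fᵀ *ᵥ w := by
        rw [hw, hy, Matrix.mulVec_mulVec, Matrix.mulVec_mulVec, Matrix.mul_assoc]
      rw [h5, Matrix.dotProduct_mulVec, ← Matrix.mulVec_transpose,
        Matrix.transpose_transpose, ← hy]
      -- goal: y ⬝ᵥ w = w ⬝ᵥ w
      conv_lhs => rw [hw, ← hPP, ← Matrix.mulVec_mulVec, Matrix.dotProduct_mulVec,
        ← Matrix.mulVec_transpose, hPsym, ← hw]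
    -- ‖y‖² lower bound from hFmin
    have hymin : (p:ℝ) * cF * (x ⬝ᵥ x) ≤ y ⬝ᵥ y := by
      have h6 := hFmin.dotProduct_mulVec_nonneg x
      simp only [star_trivial, Matrix.sub_mulVec, dotProduct_sub,
        Matrix.smul_mulVec, dotProduct_smul, Matrix.one_mulVec, smul_eq_mul] at h6
      have h7 : x ⬝ᵥ ((Fᵀ * F) *ᵥ x) = y ⬝ᵥ y := by
        rw [← Matrix.mulVec_mulVec, Matrix.dotProduct_mulVec, ← Matrix.mulVec_transpose,
          Matrix.transpose_transpose, ← hy]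
      rw [h7] at h6
      have h8 : cF * (x ⬝ᵥ x) ≤ (p:ℝ)⁻¹ * (y ⬝ᵥ y) := by linarith
      calc (p:ℝ) * cF * (x ⬝ᵥ x) = (p:ℝ) * (cF * (x ⬝ᵥ x)) := by ring
        _ ≤ (p:ℝ) * ((p:ℝ)⁻¹ * (y ⬝ᵥ y)) := mul_le_mul_of_nonneg_left h8 hp0.le
        _ = y ⬝ᵥ y := by field_simp
    rw [hquad, dot_self_eq_norm_sq w]
    rw [dot_self_eq_norm_sq y] at hymin
    have hε' : (0:ℝ) ≤ 1 - ε := by linarith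
    have hsq : ((1 - ε) * ‖(EuclideanSpace.equiv (Fin p) ℝ).symm y‖) ^ 2 ≤
        ‖(EuclideanSpace.equiv (Fin p) ℝ).symm w‖ ^ 2 := by
      apply pow_le_pow_left₀ (by positivity) hnw
    have hinv : (0:ℝ) < (p:ℝ)⁻¹ := inv_pos.mpr hp0
    have hxx : (0:ℝ) ≤ x ⬝ᵥ x := by
      rw [dot_self_eq_norm_sq x]; positivity
    rw [mul_pow] at hsq
    have h10 : (1 - ε) ^ 2 * ((p:ℝ) * cF * (x ⬝ᵥ x)) ≤
        (1 - ε) ^ 2 * ‖(EuclideanSpace.equiv (Fin p) ℝ).symm y‖ ^ 2 :=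
      mul_le_mul_of_nonneg_left hymin (by positivity)
    calc cF * (1 - ε) ^ 2 * (x ⬝ᵥ x)
        = (p:ℝ)⁻¹ * ((1 - ε) ^ 2 * ((p:ℝ) * cF * (x ⬝ᵥ x))) := by
          field_simp
      _ ≤ (p:ℝ)⁻¹ * ‖(EuclideanSpace.equiv (Fin p) ℝ).symm w‖ ^ 2 := by
          apply mul_le_mul_of_nonneg_left _ hinv.le
          linarith [h10, hsq]
  -- Hermitian-ness
  have hHerm : (R * Rᵀ - (cF * (1 - ε) ^ 2) • 1).IsHermitian := by
    unfold Matrix.IsHermitian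
    rw [Matrix.conjTranspose_eq_transpose_of_trivial]
    rw [Matrix.transpose_sub, Matrix.transpose_mul, Matrix.transpose_transpose,
      Matrix.transpose_smul, Matrix.transpose_one]
  have hPSD : (R * Rᵀ - (cF * (1 - ε) ^ 2) • 1).PosSemidef := by
    refine Matrix.PosSemidef.of_dotProduct_mulVec_nonneg hHerm (fun x => ?_)
    simp only [star_trivial, Matrix.sub_mulVec, dotProduct_sub,
      Matrix.smul_mulVec, dotProduct_smul, Matrix.one_mulVec, smul_eq_mul]
    linarith [key x]
  refine ⟨hpart1, hPSD, ?_⟩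
  -- invertibility
  have hPD : (R * Rᵀ).PosDef := by
    have h1 : (((cF * (1 - ε) ^ 2) • 1 : Matrix (Fin d) (Fin d) ℝ)).PosDef := by
      rw [Matrix.smul_one_eq_diagonal]
      exact Matrix.PosDef.diagonal
        (fun _ => mul_pos hcF (pow_pos (by linarith) 2))
    have h2 := Matrix.PosDef.posSemidef_add hPSD h1
    rwa [sub_add_cancel] at h2
  have h3 := hPD.det_pos
  rw [Matrix.det_mul, Matrix.det_transpose] at h3
  have h4 : R.det ≠ 0 := fun h => by simp [h] at h3
  exact h4.isUnit
end
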